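/- The following list of 36 triples on the point set {0,1,...,8} is a TS_3(9) whose generalized incidence matrix N_2 (a 36 × 36 zero-one matrix) is nonsingular over the rationals: {0,1,2},{0,1,3},{0,1,4},{0,2,3},{0,2,5},{0,3,6},{0,4,6},{0,4,7},{0,5,7},{0,5,8},{0,6,8},{0,7,8},{1,2,4},{1,2,5},{1,3,6},{1,3,8},{1,4,7},{1,5,6},{1,5,8},{1,6,7},{1,7,8},{2,3,4},{2,3,7},{2,4,8},{2,5,6},{2,6,7},{2,6,8},{2,7,8},{3,4,5},{3,4,8},{3,5,7},{3,5,8},{3,6,7},{4,5,6},{4,5,7},{4,6,8}. -/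

import Mathlib

open Finset

/-- `IsPBD B lam K`: the indexed family of blocks `B` (a multiset of subsets of the
point set `V`, one block per index) is a pairwise balanced design `PBD_lam(|V|, K)`:
every block has size in `K`, and every pair of distinct points lies in exactly `lam`
blocks (counted with multiplicity). -/
def IsPBD {V : Type*} [DecidableEq V] {ι : Type*} [Fintype ι]
    (B : ι → Finset V) (lam : ℕ) (K : Set ℕ) : Prop :=
  (∀ i, (B i).card ∈ K) ∧
  (∀ p : Finset V, p.card = 2 → (Finset.univ.filter (fun i => p ⊆ B i)).card = lam)

/-- The generalized incidence matrix `N₂`: rows indexed by 2-element subsets of the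
point set, columns indexed by the blocks (with multiplicity); entry is 1 if the pair
is contained in the block, and 0 otherwise. -/
def N2 {V : Type*} [DecidableEq V] {ι : Type*} (F : Type*) [Zero F] [One F]
    (B : ι → Finset V) : Matrix {P : Finset V // P.card = 2} ι F :=
  Matrix.of fun P i => if (P : Finset V) ⊆ B i then 1 else 0

/-- The 36 triples on `{0,1,...,8}` from the paper. -/
def ts3nine : Fin 36 → Finset (Fin 9) :=
  ![{0,1,2}, {0,1,3}, {0,1,4}, {0,2,3}, {0,2,5}, {0,3,6}, {0,4,6}, {0,4,7}, {0,5,7},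
    {0,5,8}, {0,6,8}, {0,7,8}, {1,2,4}, {1,2,5}, {1,3,6}, {1,3,8}, {1,4,7}, {1,5,6},
    {1,5,8}, {1,6,7}, {1,7,8}, {2,3,4}, {2,3,7}, {2,4,8}, {2,5,6}, {2,6,7}, {2,6,8},
    {2,7,8}, {3,4,5}, {3,4,8}, {3,5,7}, {3,5,8}, {3,6,7}, {4,5,6}, {4,5,7}, {4,6,8}]

def pairlist : Fin 36 → Finset (Fin 9) :=
  ![{0,1}, {0,2}, {0,3}, {0,4}, {0,5}, {0,6}, {0,7}, {0,8}, {1,2}, {1,3}, {1,4}, {1,5},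
    {1,6}, {1,7}, {1,8}, {2,3}, {2,4}, {2,5}, {2,6}, {2,7}, {2,8}, {3,4}, {3,5}, {3,6},
    {3,7}, {3,8}, {4,5}, {4,6}, {4,7}, {4,8}, {5,6}, {5,7}, {5,8}, {6,7}, {6,8}, {7,8}]

lemma pairlist_card : ∀ i, (pairlist i).card = 2 := by decide

def pairEmb : Fin 36 → {P : Finset (Fin 9) // P.card = 2} :=
  fun i => ⟨pairlist i, pairlist_card i⟩

lemma pairEmb_inj : Function.Injective pairEmb := by decide

set_option maxRecDepth 100000

lemma card_pairs : Fintype.card {P : Finset (Fin 9) // P.card = 2} = 36 := by decide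

lemma pairEmb_bij : Function.Bijective pairEmb :=
  (Fintype.bijective_iff_injective_and_card pairEmb).mpr
    ⟨pairEmb_inj, by rw [card_pairs]; rfl⟩

def sqN2 (R : Type*) [Zero R] [One R] : Matrix (Fin 36) (Fin 36) R :=
  (N2 R ts3nine).submatrix pairEmb id

def Cinv : Matrix (Fin 36) (Fin 36) (ZMod 5) :=
!![0,2,0,4,2,3,2,2,4,0,1,0,3,0,4,3,0,1,2,1,3,2,3,2,1,1,0,3,4,2,2,1,1,2,0,1;
    2,2,3,2,2,3,2,4,1,1,1,3,0,3,3,0,3,1,2,1,0,2,0,4,4,1,3,0,1,2,2,1,4,2,3,4;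
    4,1,2,4,1,4,1,4,0,4,3,2,2,2,3,2,2,3,1,3,2,1,2,4,0,3,2,2,0,1,1,3,0,1,2,0;
    3,4,2,4,1,2,1,1,3,0,3,2,4,2,0,0,4,0,1,0,2,1,2,1,0,0,2,4,0,4,4,3,3,4,2,3;
    2,0,3,2,2,0,2,2,3,0,1,3,3,3,1,2,1,4,2,4,0,2,0,2,4,4,3,3,1,4,4,1,1,4,3,1;
    0,4,1,4,2,0,2,0,1,4,1,0,1,0,2,0,3,4,2,4,3,2,3,0,1,4,0,1,4,4,4,1,3,4,0,3;
    1,1,4,1,4,3,1,3,3,0,3,2,2,4,0,0,4,0,4,2,2,1,2,3,3,0,2,2,3,4,1,0,3,4,4,1;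
    0,3,4,1,0,3,3,3,2,1,4,1,1,4,2,3,4,2,0,0,1,3,1,3,2,2,1,1,2,0,3,2,2,0,4,4;
    1,1,4,1,4,0,4,3,3,0,3,2,4,2,0,0,4,0,1,0,2,1,2,1,0,0,2,4,0,4,4,3,3,4,2,3;
    2,4,3,2,0,0,4,0,4,0,1,0,3,0,4,3,0,1,2,1,3,2,3,2,1,1,0,3,4,2,2,1,1,2,0,1;
    4,0,0,0,4,3,2,2,1,1,1,3,2,1,3,0,3,1,4,4,0,2,0,2,1,1,3,2,3,2,0,4,4,2,1,1;
    4,1,2,3,1,2,4,4,0,4,3,2,0,4,3,2,2,3,4,0,2,1,2,1,3,3,2,0,3,1,3,0,0,1,4,3;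
    4,2,3,2,2,3,2,4,4,3,4,0,3,0,1,0,3,1,2,1,0,2,0,4,4,1,3,0,1,2,2,1,4,2,3,4;
    1,1,2,4,1,4,1,4,3,2,0,0,4,0,0,2,2,3,1,3,2,1,2,4,0,3,2,2,0,1,1,3,0,1,2,0;
    4,0,0,0,4,0,2,2,1,1,1,3,0,1,3,0,3,1,2,4,0,2,0,0,1,1,3,0,3,2,2,4,4,4,3,1;
    4,3,2,3,4,2,1,4,3,4,3,4,0,1,4,0,4,3,1,0,0,1,0,1,0,3,4,0,1,1,1,0,2,4,4,0;
    2,2,0,4,2,3,2,2,1,3,4,3,0,3,1,3,0,1,2,1,3,2,3,2,1,1,0,3,4,2,2,1,1,2,0,1;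
    3,0,1,0,1,4,0,0,2,1,2,4,4,3,2,4,1,4,3,4,1,0,4,0,2,2,1,1,0,3,3,4,4,3,1,0;
    1,4,2,1,3,2,4,1,0,2,3,2,2,2,3,4,2,3,1,3,2,4,4,1,3,0,2,2,0,1,1,3,1,1,2,0;
    3,0,4,0,0,1,3,3,2,3,2,3,2,1,0,1,1,0,0,2,4,3,1,0,2,2,1,4,2,0,0,2,2,3,1,4;
    0,3,1,1,3,1,0,0,2,4,4,4,3,2,4,1,4,4,3,2,3,0,1,3,2,2,4,3,4,3,3,2,2,0,4,0;
    4,1,2,1,1,4,1,4,0,4,0,2,2,2,3,2,0,3,1,3,2,4,2,4,0,3,4,0,3,3,1,3,0,1,2,0;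
    3,0,1,0,3,4,3,0,2,1,2,1,4,1,2,4,1,2,3,2,1,0,1,0,0,2,4,1,2,3,0,4,2,0,1,2;
    2,2,0,2,2,3,2,2,1,3,1,3,0,3,1,3,3,1,2,1,3,4,3,2,1,1,3,0,1,0,2,1,1,2,0,1;
    2,4,0,4,2,1,2,4,4,3,4,2,3,2,4,1,2,4,2,3,3,2,3,4,1,3,0,0,4,0,0,1,4,0,0,4;
    1,4,2,4,1,4,1,4,0,2,0,0,4,0,0,4,0,0,4,1,4,1,2,4,0,3,2,2,0,1,1,3,0,1,2,0;
    2,2,3,2,2,0,2,2,1,0,1,3,3,3,1,0,3,1,0,1,3,2,0,2,4,4,3,3,1,4,4,1,1,4,3,1;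
    1,1,2,1,1,2,1,1,3,2,3,4,2,4,3,2,4,3,3,3,0,4,2,1,0,0,4,2,3,1,4,3,3,4,2,3;
    2,4,0,4,0,1,2,4,4,3,4,0,3,2,4,1,2,1,2,3,3,2,1,4,1,3,3,0,4,0,2,3,1,0,0,4;
    4,0,3,0,4,0,2,2,1,3,1,3,0,1,3,2,3,1,2,4,0,0,2,2,4,4,3,0,3,2,2,4,4,4,3,1;
    1,4,0,4,3,1,1,2,0,4,0,2,2,0,3,1,0,3,1,1,2,4,2,4,3,3,4,0,0,3,1,1,0,3,2,2;
    2,2,0,2,2,3,2,4,1,3,1,3,0,3,3,3,3,1,2,1,0,4,3,2,1,4,3,0,1,2,2,1,4,2,3,4;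
    1,1,4,1,4,0,1,3,3,0,3,2,4,4,0,0,4,0,1,2,2,1,2,1,3,0,2,4,3,4,4,0,3,2,2,1;
    0,1,4,1,2,0,3,1,4,1,4,4,3,0,4,0,2,2,0,3,1,3,3,1,2,0,4,4,1,2,3,0,2,2,4,1;
    3,0,1,0,3,4,0,0,2,1,2,1,4,3,2,4,1,2,3,4,1,0,1,0,2,2,4,1,0,3,0,2,2,3,1,0;
    4,3,2,3,4,2,1,1,3,4,3,4,0,1,1,0,4,3,1,0,2,1,0,1,0,0,4,0,1,4,1,0,0,4,2,3]

set_option maxHeartbeats 2000000 in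
lemma key' : ∀ i j : Fin 36,
    (sqN2 (ZMod 5) * Cinv) i j = (1 : Matrix (Fin 36) (Fin 36) (ZMod 5)) i j := by
  letI : DecidablePred fun i : Fin 36 => ∀ j : Fin 36,
      (sqN2 (ZMod 5) * Cinv) i j = (1 : Matrix (Fin 36) (Fin 36) (ZMod 5)) i j :=
    fun i => inferInstance
  decide

lemma key : sqN2 (ZMod 5) * Cinv = 1 := Matrix.ext fun i j => key' i j

lemma sq_map {R : Type*} [NonAssocSemiring R] (f : ℤ →+* R) :
    (sqN2 ℤ).map f = sqN2 R := by
  ext i j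
  simp [sqN2, N2, Matrix.submatrix, apply_ite f]

lemma det5 : IsUnit (sqN2 (ZMod 5)).det :=
  IsUnit.of_mul_eq_one Cinv.det (by rw [← Matrix.det_mul, key, Matrix.det_one])

lemma tA : (sqN2 ℤ).map (Int.castRingHom (ZMod 5)) = sqN2 (ZMod 5) :=
  sq_map _

lemma tB : ((sqN2 ℤ).map (Int.castRingHom (ZMod 5))).det = (sqN2 (ZMod 5)).det := by
  rw [tA]

lemma tC : (Int.castRingHom (ZMod 5)) ((sqN2 ℤ).det)
    = ((sqN2 ℤ).map (Int.castRingHom (ZMod 5))).det := by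
  rw [RingHom.map_det, RingHom.mapMatrix_apply]

lemma detZ_ne : (sqN2 ℤ).det ≠ 0 := by
  intro h
  have h2 : (sqN2 (ZMod 5)).det = 0 := by
    rw [← tB, ← tC, h, map_zero]
  have h3 := det5
  rw [h2] at h3
  exact absurd (isUnit_zero_iff.mp h3) (by decide)

lemma tAq : (sqN2 ℤ).map (Int.castRingHom ℚ) = sqN2 ℚ :=
  sq_map _

lemma tCq : (Int.castRingHom ℚ) ((sqN2 ℤ).det)
    = ((sqN2 ℤ).map (Int.castRingHom ℚ)).det := by
  rw [RingHom.map_det, RingHom.mapMatrix_apply]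

lemma detQ_ne : (sqN2 ℚ).det ≠ 0 := by
  have h : (sqN2 ℚ).det = ((sqN2 ℤ).det : ℚ) := by
    rw [← tAq, ← tCq]
    rfl
  rw [h]
  exact_mod_cast detZ_ne

lemma rank_row_reindex {R : Type*} [CommRing R] {l m n : Type*}
    [Fintype l] [Fintype m] [Fintype n] (A : Matrix m n R) (e : l ≃ m) :
    (A.submatrix ⇑e ⇑(Equiv.refl n)).rank = A.rank := by
  rw [Matrix.rank, Matrix.rank, Matrix.mulVecLin_submatrix,
    show LinearMap.funLeft R R ⇑e
      = (LinearEquiv.funCongrLeft R R e : (m → R) →ₗ[R] (l → R)) from rfl,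
    show LinearMap.funLeft R R ⇑(Equiv.refl n).symm = LinearMap.id from rfl,
    LinearMap.comp_id, LinearMap.range_comp, LinearEquiv.finrank_map_eq]

/-- The listed 36 triples form a `TS_3(9)`, its matrix `N₂` is a 36 × 36 matrix, and
`N₂` is nonsingular (of full rank 36) over the rationals. -/
theorem ts3nine_is_ts3_and_N2_nonsingular :
    IsPBD ts3nine 3 {3} ∧
    Fintype.card {P : Finset (Fin 9) // P.card = 2} = 36 ∧
    (N2 ℚ ts3nine).rank = 36 := by
  refine ⟨⟨by decide, by decide⟩, card_pairs, ?_⟩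
  have h1 : (sqN2 ℚ).rank = (N2 ℚ ts3nine).rank :=
    rank_row_reindex (N2 ℚ ts3nine) (Equiv.ofBijective _ pairEmb_bij)
  rw [← h1, Matrix.rank_of_isUnit _ ((Matrix.isUnit_iff_isUnit_det _).mpr
    (isUnit_iff_ne_zero.mpr detQ_ne))]
  simp
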